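/- arXiv:math/9910086 — 5 statements merged into one kernel-verified Lean document; each statement's English description precedes it below -/
import Mathlib

section
/- Let G be a second-countable topological group equipped with its Borel σ-algebra, μ a Borel measure on G, and G' a dense subgroup of G such that μ is quasi-invariant relative to G'. If μ(V) > 0 for some nonempty open subset V of G, then μ(U) > 0 for every nonempty open subset U of G; in particular μ has full support. -/
open MeasureTheory Pointwise

/-- If a Borel measure on a second-countable topological group is quasi-invariant
relative to a dense subgroup and gives positive measure to some nonempty open set,
then it gives positive measure to every nonempty open set. -/
theorem stmt_0 {G : Type*} [Group G] [TopologicalSpace G] [IsTopologicalGroup G]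
    [SecondCountableTopology G] [MeasurableSpace G] [BorelSpace G]
    (μ : Measure G) (G' : Subgroup G) (hdense : Dense (G' : Set G))
    (hqi : ∀ z ∈ G', μ.map (fun g => z * g) ≪ μ ∧ μ ≪ μ.map (fun g => z * g))
    (V : Set G) (hVopen : IsOpen V) (hVne : V.Nonempty) (hVpos : 0 < μ V) :
    ∀ U : Set G, IsOpen U → U.Nonempty → 0 < μ U := by
  intro U hUopen hUne
  by_contra h
  rw [not_lt, le_zero_iff] at h
  obtain ⟨u, hu⟩ := hUne
  -- each translate z • U with z ∈ G' is null
  have hnull : ∀ z : G', μ ((z : G) • U) = 0 := by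
    rintro ⟨z, hz⟩
    have habs := (hqi z⁻¹ (G'.inv_mem hz)).1
    have hmap : (μ.map (fun g => z⁻¹ * g)) U = μ (z • U) := by
      rw [Measure.map_apply (measurable_const_mul _) hUopen.measurableSet]
      congr 1
      ext g
      simp [Set.mem_smul_set_iff_inv_smul_mem]
    have : (μ.map (fun g => z⁻¹ * g)) U = 0 := habs h
    rw [hmap] at this
    exact this
  -- V is covered by translates of U by elements of G'
  have hcover : V ⊆ ⋃ z : G', (z : G) • U := by
    intro v hv
    have hopen : IsOpen {g : G | g⁻¹ * v ∈ U} :=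
      hUopen.preimage (by continuity)
    have hne : ({g : G | g⁻¹ * v ∈ U}).Nonempty := ⟨v * u⁻¹, by simp [mul_assoc, hu]⟩
    obtain ⟨z, hzG', hzU⟩ := hdense.exists_mem_open hopen hne
    exact Set.mem_iUnion.2 ⟨⟨z, hzG'⟩, by
      rw [Set.mem_smul_set_iff_inv_smul_mem]; exact hzU⟩
  -- Lindelöf: countable subcover
  obtain ⟨T, hTc, hTeq⟩ := TopologicalSpace.isOpen_iUnion_countable
    (fun z : G' => (z : G) • U) (fun z => hUopen.smul _)
  have : μ (⋃ z ∈ T, (z : G) • U) = 0 :=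
    (measure_biUnion_null_iff hTc).2 fun z _ => hnull z
  rw [hTeq] at this
  have := measure_mono_null hcover this
  exact absurd hVpos (by simp [this])
end

section
/- Let G be a Hausdorff topological group equipped with its Borel σ-algebra, on which multiplication is measurable, and μ a Borel probability measure on G whose topological support is all of G. If z ∈ G, z ≠ e, and μ_z is mutually absolutely continuous with μ, then T^μ(z) is not the identity operator on L²(G,μ,ℂ). Consequently, if μ is quasi-invariant relative to a subgroup G', the regular representation T^μ : G' → U(L²(G,μ,ℂ)) is injective. -/
open MeasureTheory

section Aux

variable {G : Type*} [Group G] [TopologicalSpace G] [IsTopologicalGroup G]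
    [T2Space G] [MeasurableSpace G] [BorelSpace G]

/-- Transfer of a.e. equality under left translation, given quasi-invariance. -/
lemma stmt4_transfer (μ : Measure G) (z : G)
    (h : μ ≪ μ.map (fun g => z * g)) {f f' : G → ℂ} (hff' : f =ᵐ[μ] f') :
    (fun g => f (z⁻¹ * g)) =ᵐ[μ] (fun g => f' (z⁻¹ * g)) := by
  have hN : μ {x | f x ≠ f' x} = 0 := hff'
  obtain ⟨N', hsub, hmeas, hN'⟩ := exists_measurable_superset_of_null hN
  have hm : Measurable (fun g : G => z⁻¹ * g) := measurable_const_mul _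
  have : μ ((fun g : G => z⁻¹ * g) ⁻¹' N') = 0 := by
    refine h ?_
    rw [Measure.map_apply (measurable_const_mul z) (hm hmeas)]
    have heq : (fun g : G => z * g) ⁻¹' ((fun g : G => z⁻¹ * g) ⁻¹' N') = N' := by
      ext g; simp [Set.mem_preimage]
    rw [heq]; exact hN'
  refine measure_mono_null (fun g hg => ?_) this
  exact hsub hg

/-- Separation: for `z₁ ≠ z₂` there is an open neighborhood `V` of `1` whose
translates by `z₁` and `z₂` are disjoint. -/
lemma stmt4_sep {z₁ z₂ : G} (h : z₁ ≠ z₂) :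
    ∃ V : Set G, IsOpen V ∧ (1 : G) ∈ V ∧
      ∀ g ∈ V, ∀ g' ∈ V, z₁ * g ≠ z₂ * g' := by
  obtain ⟨U₁, U₂, hU₁, hU₂, hz₁, hz₂, hdisj⟩ := t2_separation h
  refine ⟨(fun g => z₁ * g) ⁻¹' U₁ ∩ (fun g => z₂ * g) ⁻¹' U₂,
    ((hU₁.preimage (continuous_mul_left z₁)).inter
      (hU₂.preimage (continuous_mul_left z₂))), ?_, ?_⟩
  · simp [hz₁, hz₂]
  · rintro g ⟨hg₁, -⟩ g' ⟨-, hg₂'⟩ heq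
    exact hdisj.ne_of_mem hg₁ hg₂' heq

lemma stmt4_key (μ : Measure G) [IsProbabilityMeasure μ]
    (hfull : ∀ U : Set G, IsOpen U → U.Nonempty → 0 < μ U)
    {z₁ z₂ : G} (hne : z₁ ≠ z₂)
    (h₁ : μ.map (fun g => z₁ * g) ≪ μ) (h₁' : μ ≪ μ.map (fun g => z₁ * g))
    (h₂' : μ ≪ μ.map (fun g => z₂ * g)) :
    ∃ f : Lp ℂ 2 μ,
      ¬ ((fun g => (Real.sqrt (((μ.map (fun g' => z₁ * g')).rnDeriv μ g).toReal) : ℂ)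
            * f (z₁⁻¹ * g)) =ᵐ[μ]
          (fun g => (Real.sqrt (((μ.map (fun g' => z₂ * g')).rnDeriv μ g).toReal) : ℂ)
            * f (z₂⁻¹ * g))) := by
  obtain ⟨V, hV, h1V, hdisj⟩ := stmt4_sep hne
  set ind : G → ℂ := V.indicator (fun _ => 1) with hind_def
  refine ⟨indicatorConstLp 2 hV.measurableSet (measure_ne_top μ V) (1 : ℂ), fun hcontra => ?_⟩
  set f : Lp ℂ 2 μ := indicatorConstLp 2 hV.measurableSet (measure_ne_top μ V) (1 : ℂ)
  have hf : (f : G → ℂ) =ᵐ[μ] ind := indicatorConstLp_coeFn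
  have ht₁ := stmt4_transfer μ z₁ h₁' hf
  have ht₂ := stmt4_transfer μ z₂ h₂' hf
  set ρ₁ : G → ENNReal := (μ.map (fun g' => z₁ * g')).rnDeriv μ
  have hmain : ∀ᵐ g ∂μ,
      (Real.sqrt ((ρ₁ g).toReal) : ℂ) * ind (z₁⁻¹ * g)
        = (Real.sqrt (((μ.map (fun g' => z₂ * g')).rnDeriv μ g).toReal) : ℂ)
            * ind (z₂⁻¹ * g) := by
    filter_upwards [hcontra, ht₁, ht₂] with g hg h1 h2
    rw [← h1, ← h2]; exact hg
  haveI : IsProbabilityMeasure (μ.map (fun g' => z₁ * g')) :=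
    Measure.isProbabilityMeasure_map (measurable_const_mul z₁).aemeasurable
  have hlt : ∀ᵐ g ∂μ, ρ₁ g < ⊤ := Measure.rnDeriv_lt_top _ _
  set S : Set G := (fun g => z₁⁻¹ * g) ⁻¹' V with hS_def
  have hSmeas : MeasurableSet S := (measurable_const_mul _) hV.measurableSet
  have hzero : ∀ᵐ g ∂μ, g ∈ S → ρ₁ g = 0 := by
    filter_upwards [hmain, hlt] with g hg hglt hgS
    have hgV : z₁⁻¹ * g ∈ V := hgS
    have hin : ind (z₁⁻¹ * g) = 1 := Set.indicator_of_mem hgV _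
    have hout : ind (z₂⁻¹ * g) = 0 := by
      refine Set.indicator_of_notMem (fun hmem => ?_) _
      refine hdisj (z₁⁻¹ * g) hgS (z₂⁻¹ * g) hmem ?_
      simp
    rw [hin, hout, mul_one, mul_zero, Complex.ofReal_eq_zero] at hg
    have htR : ((ρ₁ g).toReal) = 0 := by
      have h1 := Real.sqrt_eq_zero'.mp hg
      have h2 := ENNReal.toReal_nonneg (a := ρ₁ g)
      linarith
    exact (ENNReal.toReal_eq_zero_iff _).mp htR |>.resolve_right hglt.ne
  have hμS : (μ.map (fun g' => z₁ * g')) S = μ V := by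
    rw [Measure.map_apply (measurable_const_mul z₁) hSmeas]
    congr 1
    ext g; simp [hS_def]
  have hint : ∫⁻ g in S, ρ₁ g ∂μ = 0 := by
    calc ∫⁻ g in S, ρ₁ g ∂μ = ∫⁻ _ in S, 0 ∂μ :=
          setLIntegral_congr_fun_ae hSmeas (hzero.mono fun g hg hgS => hg hgS)
      _ = 0 := by simp
  have := Measure.setLIntegral_rnDeriv h₁ S
  rw [hint, hμS] at this
  exact absurd this.symm (hfull V hV ⟨1, h1V⟩).ne'

end Aux

/-- If `μ` is a Borel probability measure of full support on a Hausdorff topological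
group `G`, then for `z ≠ e` with `μ_z` mutually absolutely continuous with `μ`, the
operator `T^μ(z)` is not the identity on `L²(G,μ,ℂ)`; consequently, for a subgroup
`G'` relative to which `μ` is quasi-invariant, any family of isometric isomorphisms
realizing the regular representation `T^μ` is injective. -/
theorem stmt_4 {G : Type*} [Group G] [TopologicalSpace G] [IsTopologicalGroup G]
    [T2Space G] [MeasurableSpace G] [BorelSpace G]
    (μ : Measure G) [IsProbabilityMeasure μ]
    (hfull : ∀ U : Set G, IsOpen U → U.Nonempty → 0 < μ U) :
    (∀ z : G, z ≠ 1 → μ.map (fun g => z * g) ≪ μ → μ ≪ μ.map (fun g => z * g) →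
      ∃ f : Lp ℂ 2 μ,
        ¬ ((fun g => (Real.sqrt (((μ.map (fun g' => z * g')).rnDeriv μ g).toReal) : ℂ)
            * f (z⁻¹ * g)) =ᵐ[μ] (f : G → ℂ))) ∧
    (∀ G' : Subgroup G,
      (∀ z ∈ G', μ.map (fun g => z * g) ≪ μ ∧ μ ≪ μ.map (fun g => z * g)) →
      ∀ T : G' → (Lp ℂ 2 μ ≃ₗᵢ[ℂ] Lp ℂ 2 μ),
        (∀ z : G', ∀ f : Lp ℂ 2 μ, (T z f : G → ℂ) =ᵐ[μ]
          fun g => (Real.sqrt (((μ.map (fun g' => (z : G) * g')).rnDeriv μ g).toReal) : ℂ)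
            * f ((z : G)⁻¹ * g)) →
        Function.Injective T) := by
  have hmap_one : μ.map (fun g : G => (1 : G) * g) = μ := by
    simp [Measure.map_id]
  constructor
  · intro z hz hac hac'
    have h₂' : μ ≪ μ.map (fun g : G => (1 : G) * g) := by rw [hmap_one]
    obtain ⟨f, hf⟩ := stmt4_key μ hfull hz hac hac' h₂'
    refine ⟨f, fun hcontra => hf ?_⟩
    have hrn : ∀ᵐ g ∂μ, μ.rnDeriv μ g = 1 := Measure.rnDeriv_self μ
    refine hcontra.trans ?_
    filter_upwards [hrn] with g hg
    simp [hmap_one, hg]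
  · intro G' hG' T hT z₁ z₂ heq
    by_contra hne
    have hne' : (z₁ : G) ≠ (z₂ : G) := fun h => hne (Subtype.ext h)
    obtain ⟨f, hf⟩ := stmt4_key μ hfull hne' (hG' z₁ z₁.2).1 (hG' z₁ z₁.2).2
      (hG' z₂ z₂.2).2
    refine hf ?_
    have h1 := hT z₁ f
    have h2 := hT z₂ f
    rw [heq] at h1
    exact h1.symm.trans h2
end

section
/- Let G be a separable metrizable topological group equipped with its Borel σ-algebra, G' a metrizable topological group together with a continuous injective homomorphism j : G' → G with dense image, and μ a Borel probability measure on G quasi-invariant relative to j(G'). Assume there is a jointly continuous function ρ : G' × G → (0,∞) such that ρ(e,·) = 1 and, for each z ∈ G', ρ(z,·) is a version of the Radon–Nikodym derivative dμ_{j(z)}/dμ. Then for every f ∈ L²(G,μ,ℂ) the map z ↦ T^μ(j(z))f is continuous from G' to L²(G,μ,ℂ); that is, the regular representation T^μ of G' is strongly continuous. -/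
open MeasureTheory Filter Topology ENNReal


private lemma sq_add_le' (a b : ℝ≥0∞) : (a + b) ^ 2 ≤ 4 * a ^ 2 + 4 * b ^ 2 := by
  have h1 : a + b ≤ 2 * max a b := by
    rcases le_total a b with h | h
    · calc a + b ≤ b + b := by gcongr
        _ = 2 * b := (two_mul b).symm
        _ ≤ 2 * max a b := by gcongr; exact le_max_right _ _
    · calc a + b ≤ a + a := by gcongr
        _ = 2 * a := (two_mul a).symm
        _ ≤ 2 * max a b := by gcongr; exact le_max_left _ _
  have h2 : (max a b) ^ 2 ≤ a ^ 2 + b ^ 2 := by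
    rcases le_total a b with h | h
    · rw [max_eq_right h]; exact le_add_self
    · rw [max_eq_left h]; exact le_self_add
  calc (a + b) ^ 2 ≤ (2 * max a b) ^ 2 := by gcongr
    _ = 4 * (max a b) ^ 2 := by ring
    _ ≤ 4 * (a ^ 2 + b ^ 2) := by gcongr
    _ = 4 * a ^ 2 + 4 * b ^ 2 := by ring

private lemma riesz_aux' {α : Type*} [MeasurableSpace α] (μ : Measure α)
    (F : ℕ → α → ℂ) (Fl : α → ℂ)
    (hFm : ∀ n, AEMeasurable (F n) μ) (hFlm : AEMeasurable Fl μ)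
    (hfin : ∫⁻ a, (‖Fl a‖₊ : ℝ≥0∞) ^ 2 ∂μ ≠ ∞)
    (hnorm : ∀ n, ∫⁻ a, (‖F n a‖₊ : ℝ≥0∞) ^ 2 ∂μ = ∫⁻ a, (‖Fl a‖₊ : ℝ≥0∞) ^ 2 ∂μ)
    (hae : ∀ᵐ a ∂μ, Tendsto (fun n => F n a) atTop (𝓝 (Fl a))) :
    Tendsto (fun n => ∫⁻ a, (‖F n a - Fl a‖₊ : ℝ≥0∞) ^ 2 ∂μ) atTop (𝓝 0) := by
  set C : ℝ≥0∞ := ∫⁻ a, (‖Fl a‖₊ : ℝ≥0∞) ^ 2 ∂μ with hC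
  set D : ℕ → α → ℝ≥0∞ := fun n a => 4 * (‖F n a‖₊ : ℝ≥0∞) ^ 2 + 4 * (‖Fl a‖₊ : ℝ≥0∞) ^ 2
    with hD
  set A : ℕ → α → ℝ≥0∞ := fun n a => (‖F n a - Fl a‖₊ : ℝ≥0∞) ^ 2 with hA
  have hptle : ∀ n a, A n a ≤ D n a := by
    intro n a
    calc A n a ≤ ((‖F n a‖₊ : ℝ≥0∞) + (‖Fl a‖₊ : ℝ≥0∞)) ^ 2 := by
          apply pow_le_pow_left' ?_ 2
          exact_mod_cast nnnorm_sub_le (F n a) (Fl a)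
      _ ≤ D n a := sq_add_le' _ _
  have hAm : ∀ n, AEMeasurable (A n) μ := fun n =>
    (((hFm n).sub hFlm).nnnorm.coe_nnreal_ennreal).pow_const 2
  have hFlm2 : AEMeasurable (fun a => (‖Fl a‖₊ : ℝ≥0∞) ^ 2) μ := hFlm.nnnorm.coe_nnreal_ennreal.pow_const 2
  have hDm : ∀ n, AEMeasurable (D n) μ := fun n =>
    ((aemeasurable_const.mul ((hFm n).nnnorm.coe_nnreal_ennreal.pow_const 2)).add
      (aemeasurable_const.mul hFlm2))
  have hDint : ∀ n, ∫⁻ a, D n a ∂μ = 8 * C := by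
    intro n
    rw [hD]
    beta_reduce
    rw [lintegral_add_left' (((hFm n).nnnorm.coe_nnreal_ennreal.pow_const 2).const_mul 4),
      lintegral_const_mul'' _ ((hFm n).nnnorm.coe_nnreal_ennreal.pow_const 2),
      lintegral_const_mul'' _ hFlm2, hnorm n, ← hC]
    ring
  have hAle : ∀ n, ∫⁻ a, A n a ∂μ ≤ 8 * C := fun n => by
    rw [← hDint n]; exact lintegral_mono (hptle n)
  have h8C : (8 : ℝ≥0∞) * C ≠ ∞ := by
    simp [hfin, ENNReal.mul_eq_top]
  -- integral of D n - A n
  have hsub : ∀ n, ∫⁻ a, (D n a - A n a) ∂μ = 8 * C - ∫⁻ a, A n a ∂μ := by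
    intro n
    rw [lintegral_sub' (hAm n) (lt_of_le_of_lt (hAle n) h8C.lt_top).ne
      (Eventually.of_forall (hptle n)), hDint n]
  -- Fatou
  have hfatou : ∫⁻ a, liminf (fun n => D n a - A n a) atTop ∂μ ≤
      liminf (fun n => ∫⁻ a, (D n a - A n a) ∂μ) atTop :=
    lintegral_liminf_le' (fun n => ((hDm n).sub (hAm n)))
  have hptlim : ∀ᵐ a ∂μ, liminf (fun n => D n a - A n a) atTop
      = 8 * (‖Fl a‖₊ : ℝ≥0∞) ^ 2 := by
    filter_upwards [hae] with a ha
    have hm : Tendsto (fun n => (‖F n a‖₊ : ℝ≥0∞)) atTop (𝓝 (‖Fl a‖₊ : ℝ≥0∞)) :=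
      (ENNReal.tendsto_coe.2 (ha.nnnorm))
    have hD : Tendsto (fun n => D n a) atTop (𝓝 (8 * (‖Fl a‖₊ : ℝ≥0∞) ^ 2)) := by
      have h4 : Tendsto (fun n => (4:ℝ≥0∞) * (‖F n a‖₊ : ℝ≥0∞) ^ 2) atTop
          (𝓝 (4 * (‖Fl a‖₊ : ℝ≥0∞) ^ 2)) :=
        ENNReal.Tendsto.const_mul (ENNReal.Tendsto.pow (n := 2) hm)
          (Or.inr (by norm_num))
      have := h4.add (tendsto_const_nhds (x := 4 * (‖Fl a‖₊ : ℝ≥0∞) ^ 2))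
      convert this using 2
      ring
    have hA0 : Tendsto (fun n => A n a) atTop (𝓝 0) := by
      have h0 : Tendsto (fun n => (‖F n a - Fl a‖₊ : ℝ≥0∞)) atTop (𝓝 0) := by
        have : Tendsto (fun n => F n a - Fl a) atTop (𝓝 (Fl a - Fl a)) :=
          ha.sub tendsto_const_nhds
        rw [sub_self] at this
        simpa using (ENNReal.tendsto_coe.2 this.nnnorm)
      simpa using (ENNReal.Tendsto.pow (n := 2) h0)
    have : Tendsto (fun n => D n a - A n a) atTop (𝓝 (8 * (‖Fl a‖₊ : ℝ≥0∞) ^ 2 - 0)) :=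
      ENNReal.Tendsto.sub hD hA0 (Or.inr (by simp))
    rw [tsub_zero] at this
    exact this.liminf_eq
  have hlhs : ∫⁻ a, liminf (fun n => D n a - A n a) atTop ∂μ = 8 * C := by
    rw [lintegral_congr_ae hptlim, lintegral_const_mul'' _ hFlm2, ← hC]
  have hlim : (8 : ℝ≥0∞) * C ≤ liminf (fun n => 8 * C - ∫⁻ a, A n a ∂μ) atTop := by
    calc (8 : ℝ≥0∞) * C = ∫⁻ a, liminf (fun n => D n a - A n a) atTop ∂μ := hlhs.symm
      _ ≤ liminf (fun n => ∫⁻ a, (D n a - A n a) ∂μ) atTop := hfatou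
      _ = liminf (fun n => 8 * C - ∫⁻ a, A n a ∂μ) atTop :=
        liminf_congr (Eventually.of_forall fun n => hsub n)
  set b : ℕ → ℝ≥0∞ := fun n => 8 * C - ∫⁻ a, A n a ∂μ with hb
  have hbub : limsup b atTop ≤ 8 * C :=
    limsup_le_of_le (by isBoundedDefault) (Eventually.of_forall fun n => tsub_le_self)
  have hbtendsto : Tendsto b atTop (𝓝 (8 * C)) :=
    tendsto_of_liminf_eq_limsup
      (le_antisymm ((liminf_le_limsup).trans hbub) hlim)
      (le_antisymm hbub (hlim.trans liminf_le_limsup))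
  have haeq : ∀ n, ∫⁻ a, A n a ∂μ = 8 * C - b n := fun n =>
    (ENNReal.sub_sub_cancel h8C (hAle n)).symm
  have : Tendsto (fun n => 8 * C - b n) atTop (𝓝 (8 * C - 8 * C)) :=
    ENNReal.Tendsto.sub tendsto_const_nhds hbtendsto (Or.inl h8C)
  rw [tsub_self] at this
  exact this.congr (fun n => (haeq n).symm)


/-- Strong continuity of the regular representation: if `μ` is a Borel probability
measure on a separable metrizable topological group `G`, quasi-invariant relative to
the dense image of a continuous injective homomorphism `j : G' → G`, and the
quasi-invariance factor `ρ` is jointly continuous, positive, with `ρ(e,·) = 1`, then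
for every `f ∈ L²(G,μ,ℂ)` the map `z ↦ T^μ(j z) f` is continuous from `G'` into
`L²(G,μ,ℂ)`. -/
theorem stmt_5 {G G' : Type*} [Group G] [TopologicalSpace G] [IsTopologicalGroup G]
    [TopologicalSpace.SeparableSpace G] [TopologicalSpace.MetrizableSpace G]
    [MeasurableSpace G] [BorelSpace G]
    [Group G'] [TopologicalSpace G'] [IsTopologicalGroup G']
    [TopologicalSpace.MetrizableSpace G']
    (μ : Measure G) [IsProbabilityMeasure μ]
    (j : G' →* G) (hjcont : Continuous j) (hjinj : Function.Injective j)
    (hjdense : DenseRange j)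
    (hqi : ∀ z : G', μ.map (fun g => j z * g) ≪ μ ∧ μ ≪ μ.map (fun g => j z * g))
    (ρ : G' × G → ℝ) (hρcont : Continuous ρ) (hρpos : ∀ p, 0 < ρ p)
    (hρone : ∀ g : G, ρ (1, g) = 1)
    (hρversion : ∀ z : G',
      (fun g => ENNReal.ofReal (ρ (z, g))) =ᵐ[μ] (μ.map (fun g => j z * g)).rnDeriv μ) :
    ∀ f : Lp ℂ 2 μ, ∃ T : G' → Lp ℂ 2 μ,
      (∀ z : G', (T z : G → ℂ) =ᵐ[μ]
        fun g => (Real.sqrt (ρ (z, g)) : ℂ) * f ((j z)⁻¹ * g)) ∧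
      Continuous T := by
  set φ : G' → (G → ℂ) → G → ℂ :=
    fun z u g => (Real.sqrt (ρ (z, g)) : ℂ) * u ((j z)⁻¹ * g) with hφ
  have hmulmeas : ∀ a : G, Measurable fun g : G => a * g := fun a =>
    (continuous_const.mul continuous_id).measurable
  have hmapinv : ∀ z : G', μ.map (fun g => (j z)⁻¹ * g) ≪ μ := by
    intro z
    have := (hqi z⁻¹).1
    simpa [map_inv] using this
  -- composition a.e.-measurability for ℝ≥0∞ valued functions
  have hcomp_aemeas : ∀ (z : G') (u : G → ℝ≥0∞), AEMeasurable u μ →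
      AEMeasurable (fun g => u ((j z)⁻¹ * g)) μ := by
    intro z u hu
    have h1 : AEMeasurable u (μ.map (fun g => (j z)⁻¹ * g)) := hu.mono' (hmapinv z)
    simpa [Function.comp_def] using h1.comp_measurable (hmulmeas ((j z)⁻¹))
  -- translation identity for lintegrals
  have hL1 : ∀ (z : G') (u : G → ℝ≥0∞), AEMeasurable u μ →
      ∫⁻ g, ENNReal.ofReal (ρ (z, g)) * u ((j z)⁻¹ * g) ∂μ = ∫⁻ g, u g ∂μ := by
    intro z u hu
    haveI : IsProbabilityMeasure (μ.map (fun g => j z * g)) :=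
      Measure.isProbabilityMeasure_map (hmulmeas (j z)).aemeasurable
    have hcomp := hcomp_aemeas z u hu
    have h1 : ∫⁻ g, ENNReal.ofReal (ρ (z, g)) * u ((j z)⁻¹ * g) ∂μ
        = ∫⁻ g, (μ.map (fun g => j z * g)).rnDeriv μ g * u ((j z)⁻¹ * g) ∂μ :=
      lintegral_congr_ae ((hρversion z).mul (EventuallyEq.refl _ _))
    have h2 : ∫⁻ g, (μ.map (fun g => j z * g)).rnDeriv μ g * u ((j z)⁻¹ * g) ∂μ
        = ∫⁻ g, u ((j z)⁻¹ * g) ∂(μ.map (fun g => j z * g)) :=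
      lintegral_rnDeriv_mul (hqi z).1 hcomp
    have h3 : ∫⁻ g, u ((j z)⁻¹ * g) ∂(μ.map (fun g => j z * g))
        = ∫⁻ g, u ((j z)⁻¹ * (j z * g)) ∂μ :=
      lintegral_map' (hcomp.mono' (hqi z).1) (hmulmeas (j z)).aemeasurable
    simp only [inv_mul_cancel_left] at h3
    rw [h1, h2, h3]
  -- pointwise square norm identity
  have hptsq : ∀ (z : G') (u : G → ℂ) (g : G),
      (‖φ z u g‖₊ : ℝ≥0∞) ^ 2
        = ENNReal.ofReal (ρ (z, g)) * (‖u ((j z)⁻¹ * g)‖₊ : ℝ≥0∞) ^ 2 := by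
    intro z u g
    have h0 : (0:ℝ) ≤ Real.sqrt (ρ (z, g)) := Real.sqrt_nonneg _
    have h1 : (‖(Real.sqrt (ρ (z, g)) : ℂ)‖₊ : ℝ≥0∞) = ENNReal.ofReal (Real.sqrt (ρ (z, g))) := by
      rw [← ENNReal.ofReal_coe_nnreal, coe_nnnorm]
      simp [Complex.norm_real, abs_of_nonneg h0]
    calc (‖φ z u g‖₊ : ℝ≥0∞) ^ 2
        = ((‖(Real.sqrt (ρ (z, g)) : ℂ)‖₊ : ℝ≥0∞) * (‖u ((j z)⁻¹ * g)‖₊ : ℝ≥0∞)) ^ 2 := by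
          rw [hφ]; push_cast [nnnorm_mul]; ring
      _ = (ENNReal.ofReal (Real.sqrt (ρ (z, g)))) ^ 2 * (‖u ((j z)⁻¹ * g)‖₊ : ℝ≥0∞) ^ 2 := by
          rw [h1, mul_pow]
      _ = ENNReal.ofReal (ρ (z, g)) * (‖u ((j z)⁻¹ * g)‖₊ : ℝ≥0∞) ^ 2 := by
          rw [← ENNReal.ofReal_pow h0, Real.sq_sqrt (hρpos (z, g)).le]
  -- main L² norm identity
  have hL2 : ∀ (z : G') (u : G → ℂ), AEStronglyMeasurable u μ →
      ∫⁻ g, (‖φ z u g‖₊ : ℝ≥0∞) ^ 2 ∂μ = ∫⁻ g, (‖u g‖₊ : ℝ≥0∞) ^ 2 ∂μ := by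
    intro z u hu
    have hum : AEMeasurable (fun g => (‖u g‖₊ : ℝ≥0∞) ^ 2) μ :=
      hu.aemeasurable.nnnorm.coe_nnreal_ennreal.pow_const 2
    calc ∫⁻ g, (‖φ z u g‖₊ : ℝ≥0∞) ^ 2 ∂μ
        = ∫⁻ g, ENNReal.ofReal (ρ (z, g)) * (fun g' => (‖u g'‖₊ : ℝ≥0∞) ^ 2) ((j z)⁻¹ * g) ∂μ :=
          lintegral_congr fun g => hptsq z u g
      _ = ∫⁻ g, (‖u g‖₊ : ℝ≥0∞) ^ 2 ∂μ := hL1 z _ hum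
  -- a.e.-strong measurability of φ z u
  have hφmeas : ∀ (z : G') (u : G → ℂ), AEStronglyMeasurable u μ →
      AEStronglyMeasurable (φ z u) μ := by
    intro z u hu
    have h1 : Continuous fun g : G => (Real.sqrt (ρ (z, g)) : ℂ) :=
      Complex.continuous_ofReal.comp (Real.continuous_sqrt.comp (hρcont.comp
        (Continuous.prodMk_right z)))
    have h2 : AEStronglyMeasurable (fun g => u ((j z)⁻¹ * g)) μ := by
      simpa [Function.comp_def] using
        (hu.mono_ac (hmapinv z)).comp_measurable (hmulmeas ((j z)⁻¹))
    exact h1.aestronglyMeasurable.mul h2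
  -- eLpNorm formula
  have hsnorm : ∀ v : G → ℂ,
      eLpNorm v 2 μ = (∫⁻ g, (‖v g‖₊ : ℝ≥0∞) ^ 2 ∂μ) ^ (1/2 : ℝ) := by
    intro v
    rw [eLpNorm_eq_lintegral_rpow_enorm_toReal (by norm_num) (by norm_num)]
    rw [show ((2:ℝ≥0∞).toReal) = (2:ℝ) by norm_num]
    congr 1
    apply lintegral_congr
    intro g
    rw [← ENNReal.rpow_natCast]
    norm_num
    rfl
  have hiso : ∀ (z : G') (u : G → ℂ), AEStronglyMeasurable u μ →
      eLpNorm (φ z u) 2 μ = eLpNorm u 2 μ := by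
    intro z u hu
    rw [hsnorm, hsnorm, hL2 z u hu]
  have hmem : ∀ (z : G') (u : Lp ℂ 2 μ), MemLp (φ z ⇑u) 2 μ := by
    intro z u
    refine ⟨hφmeas z _ (Lp.aestronglyMeasurable u), ?_⟩
    rw [hiso z _ (Lp.aestronglyMeasurable u)]
    exact Lp.eLpNorm_lt_top u
  -- congruence of φ in the function argument
  have hφcongr : ∀ (z : G') (u v : G → ℂ), u =ᵐ[μ] v → φ z u =ᵐ[μ] φ z v := by
    intro z u v huv
    have h1 : (fun g => u ((j z)⁻¹ * g)) =ᵐ[μ] (fun g => v ((j z)⁻¹ * g)) := by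
      have := ae_eq_comp (μ := μ) (hmulmeas ((j z)⁻¹)).aemeasurable
        (huv.filter_mono (hmapinv z).ae_le)
      simpa [Function.comp_def] using this
    exact h1.mono fun g hg => by simp only [hφ, hg]
  haveI : Fact ((1:ℝ≥0∞) ≤ 2) := ⟨one_le_two⟩
  -- isometry of differences
  have hdist : ∀ (z : G') (u v : Lp ℂ 2 μ),
      dist ((hmem z u).toLp _) ((hmem z v).toLp _) = dist u v := by
    intro z u v
    rw [Lp.dist_def, Lp.dist_def]
    congr 1
    have he : ⇑((hmem z u).toLp _) - ⇑((hmem z v).toLp _) =ᵐ[μ] φ z (⇑u - ⇑v) := by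
      have h1 := (hmem z u).coeFn_toLp
      have h2 := (hmem z v).coeFn_toLp
      refine (h1.sub h2).trans (Eventually.of_forall fun g => ?_)
      simp only [hφ, Pi.sub_apply, mul_sub]
    rw [eLpNorm_congr_ae he,
      hiso z _ ((Lp.aestronglyMeasurable u).sub (Lp.aestronglyMeasurable v))]
  intro f
  refine ⟨fun z => (hmem z f).toLp _, fun z => (hmem z f).coeFn_toLp, ?_⟩
  -- continuity via sequences
  letI : MetricSpace G := TopologicalSpace.metrizableSpaceMetric G
  have key : ∀ (z₀ : G') (x : ℕ → G'), Tendsto x atTop (𝓝 z₀) →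
      Tendsto (fun n => (hmem (x n) f).toLp _) atTop (𝓝 ((hmem z₀ f).toLp _)) := by
    intro z₀ x hx
    rw [Metric.tendsto_atTop]
    intro ε hε
    obtain ⟨h, hh⟩ := (BoundedContinuousFunction.toLp_denseRange (E := ℂ) (μ := μ) (p := 2) ℂ
      (by norm_num)).exists_dist_lt f (by linarith : (0:ℝ) < ε/3)
    set hLp : Lp ℂ 2 μ := BoundedContinuousFunction.toLp 2 μ ℂ h with hLpdef
    set hc : G → ℂ := ⇑h with hcdef
    have hcm : AEStronglyMeasurable hc μ := h.continuous.aestronglyMeasurable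
    have hfin : ∫⁻ g, (‖φ z₀ hc g‖₊ : ℝ≥0∞) ^ 2 ∂μ ≠ ∞ := by
      rw [hL2 z₀ hc hcm]
      have hb : ∫⁻ g, (‖hc g‖₊ : ℝ≥0∞) ^ 2 ∂μ ≤ (‖h‖₊ : ℝ≥0∞) ^ 2 * μ Set.univ := by
        rw [← lintegral_const]
        refine lintegral_mono fun g => ?_
        gcongr
        exact_mod_cast h.nnnorm_coe_le_nnnorm g
      refine (lt_of_le_of_lt hb ?_).ne
      exact ENNReal.mul_lt_top (ENNReal.pow_ne_top ENNReal.coe_ne_top).lt_top (measure_lt_top μ _)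
    have hptconv : ∀ g : G, Tendsto (fun n => φ (x n) hc g) atTop (𝓝 (φ z₀ hc g)) := by
      intro g
      have h1 : Tendsto (fun n => (x n, g)) atTop (𝓝 (z₀, g)) :=
        hx.prodMk_nhds tendsto_const_nhds
      have h2 : Tendsto (fun n => (Real.sqrt (ρ (x n, g)) : ℂ)) atTop
          (𝓝 (Real.sqrt (ρ (z₀, g)) : ℂ)) :=
        ((Complex.continuous_ofReal.comp (Real.continuous_sqrt.comp hρcont)).tendsto
          (z₀, g)).comp h1
      have h3 : Tendsto (fun n => hc ((j (x n))⁻¹ * g)) atTop (𝓝 (hc ((j z₀)⁻¹ * g))) := by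
        have hcont : Continuous fun z : G' => hc ((j z)⁻¹ * g) :=
          h.continuous.comp ((hjcont.inv).mul continuous_const)
        exact (hcont.tendsto z₀).comp hx
      exact h2.mul h3
    have hR := riesz_aux' μ (fun n => φ (x n) hc) (φ z₀ hc)
      (fun n => (hφmeas (x n) hc hcm).aemeasurable) ((hφmeas z₀ hc hcm).aemeasurable)
      hfin
      (fun n => by rw [hL2 (x n) hc hcm, hL2 z₀ hc hcm])
      (Eventually.of_forall hptconv)
    have hdisteq : ∀ n, dist ((hmem (x n) hLp).toLp _) ((hmem z₀ hLp).toLp _)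
        = Real.sqrt ((∫⁻ g, (‖φ (x n) hc g - φ z₀ hc g‖₊ : ℝ≥0∞) ^ 2 ∂μ).toReal) := by
      intro n
      rw [Lp.dist_def]
      have hcc : ⇑hLp =ᵐ[μ] hc := BoundedContinuousFunction.coeFn_toLp 2 μ ℂ h
      have he : ⇑((hmem (x n) hLp).toLp _) - ⇑((hmem z₀ hLp).toLp _)
          =ᵐ[μ] fun g => φ (x n) hc g - φ z₀ hc g := by
        have h1 := (hmem (x n) hLp).coeFn_toLp
        have h2 := (hmem z₀ hLp).coeFn_toLp
        have h3 := hφcongr (x n) _ _ hcc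
        have h4 := hφcongr z₀ _ _ hcc
        exact (h1.sub h2).trans (h3.sub h4)
      rw [eLpNorm_congr_ae he, hsnorm, Real.sqrt_eq_rpow, ENNReal.toReal_rpow]
    have hmid : Tendsto (fun n => dist ((hmem (x n) hLp).toLp _) ((hmem z₀ hLp).toLp _))
        atTop (𝓝 0) := by
      have htoReal : Tendsto
          (fun n => (∫⁻ g, (‖φ (x n) hc g - φ z₀ hc g‖₊ : ℝ≥0∞) ^ 2 ∂μ).toReal)
          atTop (𝓝 0) := by
        have := (ENNReal.tendsto_toReal (a := 0) (by simp)).comp hR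
        simpa [Function.comp_def] using this
      have hsq := (Real.continuous_sqrt.tendsto 0).comp htoReal
      rw [Real.sqrt_zero] at hsq
      exact Tendsto.congr (fun n => (hdisteq n).symm) hsq
    obtain ⟨N, hN⟩ := Filter.eventually_atTop.1
      (hmid.eventually (gt_mem_nhds (by linarith : (0:ℝ) < ε/3)))
    refine ⟨N, fun n hn => ?_⟩
    have hmidn := hN n hn
    have ht := dist_triangle4 ((hmem (x n) f).toLp _) ((hmem (x n) hLp).toLp _)
      ((hmem z₀ hLp).toLp _) ((hmem z₀ f).toLp _)
    rw [hdist (x n) f hLp, hdist z₀ hLp f] at ht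
    have h5 : dist hLp f = dist f hLp := dist_comm _ _
    calc dist ((hmem (x n) f).toLp _) ((hmem z₀ f).toLp _)
        ≤ dist f hLp + dist ((hmem (x n) hLp).toLp _) ((hmem z₀ hLp).toLp _) + dist hLp f :=
          ht
      _ < ε/3 + ε/3 + ε/3 := by rw [h5]; exact add_lt_add (add_lt_add hh hmidn) hh
      _ = ε := by ring
  exact SeqContinuous.continuous fun x z₀ hx => key z₀ x hx
end

section
/- Let G be a topological group equipped with its Borel σ-algebra, on which multiplication is measurable, and let μ and μ' be Borel probability measures on G which are mutually absolutely continuous and both quasi-invariant relative to a subgroup G'. Then the map V defined by (Vf)(g) = f(g)·((dμ/dμ')(g))^{1/2} is a surjective linear isometry from L²(G,μ,ℂ) onto L²(G,μ',ℂ) which intertwines the regular representations: V ∘ T^μ(ψ) = T^{μ'}(ψ) ∘ V for every ψ ∈ G'. -/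
open MeasureTheory
open scoped ENNReal NNReal

section Stmt9Aux

variable {G : Type*} [MeasurableSpace G]

/-- Pointwise: the squared extended norm of `h g * √((dν/dν')(g))` equals
`(dν/dν')(g) * ‖h g‖ₑ²` whenever the Radon–Nikodym derivative is finite. -/
lemma stmt9_pointwise (x : ℝ≥0∞) (hx : x < ∞) (z : ℂ) :
    ((‖z * (Real.sqrt x.toReal : ℂ)‖₊ : ℝ≥0∞)) ^ (2 : ℝ)
      = x * (‖z‖₊ : ℝ≥0∞) ^ (2 : ℝ) := by
  have hnn : 0 ≤ Real.sqrt x.toReal := Real.sqrt_nonneg _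
  rw [nnnorm_mul, ENNReal.coe_mul,
    ENNReal.mul_rpow_of_nonneg _ _ (by norm_num : (0:ℝ) ≤ 2)]
  have h1 : ((‖(Real.sqrt x.toReal : ℂ)‖₊ : ℝ≥0∞)) = ENNReal.ofReal (Real.sqrt x.toReal) := by
    rw [Complex.nnnorm_real]
    exact Real.enorm_eq_ofReal hnn
  have h2 : Real.sqrt x.toReal ^ (2 : ℝ) = x.toReal := by
    rw [show (2:ℝ) = ((2:ℕ):ℝ) by norm_num, Real.rpow_natCast]
    exact Real.sq_sqrt ENNReal.toReal_nonneg
  rw [h1, ENNReal.ofReal_rpow_of_nonneg hnn (by norm_num : (0:ℝ) ≤ 2), h2,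
    ENNReal.ofReal_toReal hx.ne, mul_comm]

/-- The multiplication-by-`√(dν/dν')` map preserves the `L²` seminorm. -/
lemma stmt9_eLpNorm (ν ν' : Measure G) [IsFiniteMeasure ν] [SigmaFinite ν']
    (hνν' : ν ≪ ν') (h : G → ℂ) (hh : AEStronglyMeasurable h ν') :
    eLpNorm (fun g => h g * (Real.sqrt ((ν.rnDeriv ν' g).toReal) : ℂ)) 2 ν'
      = eLpNorm h 2 ν := by
  rw [eLpNorm_eq_lintegral_rpow_enorm_toReal two_ne_zero ENNReal.ofNat_ne_top,
    eLpNorm_eq_lintegral_rpow_enorm_toReal two_ne_zero ENNReal.ofNat_ne_top]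
  congr 1
  have hmeas : AEMeasurable (fun g => ‖h g‖ₑ ^ ((2:ℝ≥0∞).toReal)) ν' := by
    exact hh.enorm.pow_const _
  rw [← lintegral_rnDeriv_mul hνν' hmeas]
  refine lintegral_congr_ae ?_
  filter_upwards [Measure.rnDeriv_lt_top ν ν'] with g hg
  have := stmt9_pointwise (ν.rnDeriv ν' g) hg (h g)
  simp at this ⊢
  simp only [enorm_eq_nnnorm, Complex.nnnorm_real]
  exact this

/-- The multiplication-by-`√(dν/dν')` map sends `L²(ν)` into `L²(ν')`. -/
lemma stmt9_memLp (ν ν' : Measure G) [IsFiniteMeasure ν] [IsFiniteMeasure ν']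
    (hνν' : ν ≪ ν') (hν'ν : ν' ≪ ν) (f : Lp ℂ 2 ν) :
    MemLp (fun g => f g * (Real.sqrt ((ν.rnDeriv ν' g).toReal) : ℂ)) 2 ν' := by
  constructor
  · exact ((Lp.aestronglyMeasurable f).mono_ac hν'ν).mul
      ((Complex.measurable_ofReal.comp
        ((Measure.measurable_rnDeriv ν ν').ennreal_toReal.sqrt)).aestronglyMeasurable)
  · rw [stmt9_eLpNorm ν ν' hνν' _ ((Lp.aestronglyMeasurable f).mono_ac hν'ν)]
    exact Lp.eLpNorm_lt_top f

end Stmt9Aux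

/-- If `μ` and `μ'` are mutually absolutely continuous Borel probability measures on
`G`, both quasi-invariant relative to a subgroup `G'`, then
`(Vf)(g) = f(g) · ((dμ/dμ')(g))^{1/2}` is a surjective linear isometry
`L²(G,μ,ℂ) → L²(G,μ',ℂ)` intertwining the regular representations:
`V ∘ T^μ(ψ) = T^{μ'}(ψ) ∘ V` for every `ψ ∈ G'`. -/
theorem stmt_9 {G : Type*} [Group G] [TopologicalSpace G] [IsTopologicalGroup G]
    [MeasurableSpace G] [BorelSpace G]
    (μ μ' : Measure G) [IsProbabilityMeasure μ] [IsProbabilityMeasure μ']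
    (hμμ' : μ ≪ μ') (hμ'μ : μ' ≪ μ) (G' : Subgroup G)
    (hqi : ∀ ψ ∈ G', μ.map (fun g => ψ * g) ≪ μ ∧ μ ≪ μ.map (fun g => ψ * g))
    (hqi' : ∀ ψ ∈ G', μ'.map (fun g => ψ * g) ≪ μ' ∧ μ' ≪ μ'.map (fun g => ψ * g)) :
    ∃ V : Lp ℂ 2 μ →ₗᵢ[ℂ] Lp ℂ 2 μ',
      Function.Surjective V ∧
      (∀ f : Lp ℂ 2 μ, (V f : G → ℂ) =ᵐ[μ']
        fun g => f g * (Real.sqrt ((μ.rnDeriv μ' g).toReal) : ℂ)) ∧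
      (∀ ψ : G, ψ ∈ G' → ∀ f f₁ : Lp ℂ 2 μ,
        ((f₁ : G → ℂ) =ᵐ[μ]
          fun g => (Real.sqrt (((μ.map (fun g' => ψ * g')).rnDeriv μ g).toReal) : ℂ)
            * f (ψ⁻¹ * g)) →
        ((V f₁ : G → ℂ) =ᵐ[μ']
          fun g => (Real.sqrt (((μ'.map (fun g' => ψ * g')).rnDeriv μ' g).toReal) : ℂ)
            * (V f) (ψ⁻¹ * g))) := by
  classical
  have hmul : ∀ ψ : G, Measurable (fun g : G => ψ * g) := fun ψ =>
    (continuous_const.mul continuous_id).measurable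
  have hemb : ∀ ψ : G, MeasurableEmbedding (fun g : G => ψ * g) := fun ψ => by
    have := (Homeomorph.mulLeft ψ).toMeasurableEquiv.measurableEmbedding
    simpa [Homeomorph.toMeasurableEquiv, Homeomorph.mulLeft] using this
  -- the forward map
  set s : G → ℂ := fun g => (Real.sqrt ((μ.rnDeriv μ' g).toReal) : ℂ) with hs
  set s' : G → ℂ := fun g => (Real.sqrt ((μ'.rnDeriv μ g).toReal) : ℂ) with hs'
  set Vfun : Lp ℂ 2 μ → Lp ℂ 2 μ' :=
    fun f => (stmt9_memLp μ μ' hμμ' hμ'μ f).toLp _ with hVfun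
  have hVcoe : ∀ f : Lp ℂ 2 μ, (Vfun f : G → ℂ) =ᵐ[μ'] fun g => f g * s g := fun f =>
    MemLp.coeFn_toLp _
  set Wfun : Lp ℂ 2 μ' → Lp ℂ 2 μ :=
    fun h => (stmt9_memLp μ' μ hμ'μ hμμ' h).toLp _ with hWfun
  have hWcoe : ∀ h : Lp ℂ 2 μ', (Wfun h : G → ℂ) =ᵐ[μ] fun g => h g * s' g := fun h =>
    MemLp.coeFn_toLp _
  -- product of reciprocal Radon–Nikodym derivatives is 1
  have hrecip : ∀ᵐ g ∂μ', s' g * s g = 1 := by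
    have h1 : μ'.rnDeriv μ * μ.rnDeriv μ' =ᵐ[μ'] μ'.rnDeriv μ' :=
      Measure.rnDeriv_mul_rnDeriv hμ'μ
    have h2 : μ'.rnDeriv μ' =ᵐ[μ'] 1 := Measure.rnDeriv_self μ'
    filter_upwards [h1, h2] with g hg1 hg2
    have : μ'.rnDeriv μ g * μ.rnDeriv μ' g = 1 := by
      have := hg1.trans hg2
      simpa using this
    have hre : (μ'.rnDeriv μ g).toReal * (μ.rnDeriv μ' g).toReal = 1 := by
      rw [← ENNReal.toReal_mul, this]; simp
    have : Real.sqrt ((μ'.rnDeriv μ g).toReal) * Real.sqrt ((μ.rnDeriv μ' g).toReal) = 1 := by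
      rw [← Real.sqrt_mul ENNReal.toReal_nonneg, hre, Real.sqrt_one]
    simp only [hs, hs']
    exact_mod_cast congrArg (Complex.ofReal) this
  -- build the linear isometry
  have hadd : ∀ f g : Lp ℂ 2 μ, Vfun (f + g) = Vfun f + Vfun g := by
    intro f g
    apply Lp.ext
    have h1 := hVcoe (f + g)
    have h2 : ((f + g : Lp ℂ 2 μ) : G → ℂ) =ᵐ[μ'] fun x => f x + g x :=
      hμ'μ.ae_le (Lp.coeFn_add f g)
    have h3 : ((Vfun f + Vfun g : Lp ℂ 2 μ') : G → ℂ)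
        =ᵐ[μ'] fun x => Vfun f x + Vfun g x := Lp.coeFn_add _ _
    filter_upwards [h1, h2, h3, hVcoe f, hVcoe g] with x hx1 hx2 hx3 hx4 hx5
    rw [hx1, hx2, hx3, hx4, hx5]; ring
  have hsmul : ∀ (c : ℂ) (f : Lp ℂ 2 μ), Vfun (c • f) = c • Vfun f := by
    intro c f
    apply Lp.ext
    have h2 : ((c • f : Lp ℂ 2 μ) : G → ℂ) =ᵐ[μ'] fun x => c • f x :=
      hμ'μ.ae_le (Lp.coeFn_smul c f)
    have h3 : ((c • Vfun f : Lp ℂ 2 μ') : G → ℂ) =ᵐ[μ'] fun x => c • Vfun f x :=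
      Lp.coeFn_smul c _
    filter_upwards [hVcoe (c • f), h2, h3, hVcoe f] with x hx1 hx2 hx3 hx4
    rw [hx1, hx2, hx3, hx4]; simp [smul_eq_mul]; ring
  have hnorm : ∀ f : Lp ℂ 2 μ, ‖Vfun f‖ = ‖f‖ := by
    intro f
    rw [hVfun]
    rw [Lp.norm_toLp, stmt9_eLpNorm μ μ' hμμ' _ ((Lp.aestronglyMeasurable f).mono_ac hμ'μ),
      ← Lp.norm_def]
  refine ⟨⟨⟨⟨Vfun, hadd⟩, hsmul⟩, hnorm⟩, ?_, hVcoe, ?_⟩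
  · -- surjectivity
    intro h
    refine ⟨Wfun h, ?_⟩
    apply Lp.ext
    have h2 : (Wfun h : G → ℂ) =ᵐ[μ'] fun g => h g * s' g := hμ'μ.ae_le (hWcoe h)
    filter_upwards [hVcoe (Wfun h), h2, hrecip] with g hg1 hg2 hg3
    show Vfun (Wfun h) g = h g
    rw [hg1, hg2, mul_assoc, hg3, mul_one]
  · -- intertwining
    intro ψ hψ f f₁ hf₁
    haveI : IsProbabilityMeasure (μ.map (fun g : G => ψ * g)) :=
      Measure.isProbabilityMeasure_map (hmul ψ).aemeasurable
    haveI : IsProbabilityMeasure (μ'.map (fun g : G => ψ * g)) :=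
      Measure.isProbabilityMeasure_map (hmul ψ).aemeasurable
    have hqmp : Measure.QuasiMeasurePreserving (fun g : G => ψ⁻¹ * g) μ' μ' :=
      ⟨hmul ψ⁻¹, (hqi' ψ⁻¹ (G'.inv_mem hψ)).1⟩
    set a : G → ℝ≥0∞ := (μ.map (fun g : G => ψ * g)).rnDeriv μ with ha
    set b : G → ℝ≥0∞ := (μ'.map (fun g : G => ψ * g)).rnDeriv μ' with hb
    set c : G → ℝ≥0∞ := (μ.map (fun g : G => ψ * g)).rnDeriv (μ'.map (fun g : G => ψ * g))
      with hc
    have e1 : (fun g => a g * μ.rnDeriv μ' g)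
        =ᵐ[μ'] (μ.map (fun g : G => ψ * g)).rnDeriv μ' :=
      Measure.rnDeriv_mul_rnDeriv (hqi ψ hψ).1
    have e3 : (fun g => c g * b g) =ᵐ[μ'] (μ.map (fun g : G => ψ * g)).rnDeriv μ' :=
      Measure.rnDeriv_mul_rnDeriv (hμμ'.map (hmul ψ))
    have e2 : (fun x => c (ψ * x)) =ᵐ[μ'] μ.rnDeriv μ' := (hemb ψ).rnDeriv_map μ μ'
    have e2' : c =ᵐ[μ'] fun x => μ.rnDeriv μ' (ψ⁻¹ * x) := by
      filter_upwards [hqmp.ae_eq_comp e2] with x hx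
      simp only [Function.comp] at hx
      rwa [mul_inv_cancel_left] at hx
    have key : ∀ᵐ g ∂μ', a g * μ.rnDeriv μ' g = b g * μ.rnDeriv μ' (ψ⁻¹ * g) := by
      filter_upwards [e1, e3, e2'] with g hg1 hg3 hg2
      rw [hg1, ← hg3, hg2, mul_comm]
    have hf₁' := hμ'μ.ae_le hf₁
    have hVfτ := hqmp.ae_eq_comp (hVcoe f)
    filter_upwards [hVcoe f₁, hf₁', hVfτ, key] with g hg1 hg2 hg3 hgk
    have hg3' : (Vfun f : G → ℂ) (ψ⁻¹ * g) = f (ψ⁻¹ * g) * s (ψ⁻¹ * g) := hg3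
    show (Vfun f₁ : G → ℂ) g
      = (Real.sqrt ((b g).toReal) : ℂ) * (Vfun f : G → ℂ) (ψ⁻¹ * g)
    rw [hg1, hg2, hg3']
    have hR : Real.sqrt ((a g).toReal) * Real.sqrt ((μ.rnDeriv μ' g).toReal)
        = Real.sqrt ((b g).toReal) * Real.sqrt ((μ.rnDeriv μ' (ψ⁻¹ * g)).toReal) := by
      rw [← Real.sqrt_mul ENNReal.toReal_nonneg, ← Real.sqrt_mul ENNReal.toReal_nonneg,
        ← ENNReal.toReal_mul, ← ENNReal.toReal_mul, hgk]
    have hC : ((Real.sqrt ((a g).toReal) : ℝ) : ℂ) * ((Real.sqrt ((μ.rnDeriv μ' g).toReal) : ℝ) : ℂ)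
        = ((Real.sqrt ((b g).toReal) : ℝ) : ℂ)
          * ((Real.sqrt ((μ.rnDeriv μ' (ψ⁻¹ * g)).toReal) : ℝ) : ℂ) := by
      exact_mod_cast hR
    simp only [hs, ha, hb]
    linear_combination f (ψ⁻¹ * g) * hC
end

section
/- For every n ≥ 1, the linear span of the functions x ↦ exp((b,x) − (Ax,x)), where b ranges over ℝⁿ, A ranges over symmetric positive-definite real n×n matrices, and (·,·) is the standard inner product on ℝⁿ, is dense in the Hilbert space L²(ℝⁿ, λ, ℝ), where λ is Lebesgue measure on ℝⁿ. -/
open MeasureTheory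

open Real Filter Topology OnePoint
open scoped RealInnerProductSpace ENNReal

namespace Stmt11Aux

variable {n : ℕ}

/-- The Gaussian-type generator function on Euclidean space. -/
noncomputable def gen (n : ℕ) (c : ℝ) (b : EuclideanSpace ℝ (Fin n)) :
    C(EuclideanSpace ℝ (Fin n), ℝ) :=
  ⟨fun x => rexp (⟪b, x⟫ - c * ‖x‖ ^ 2),
    Real.continuous_exp.comp (((continuous_const.inner continuous_id).sub
      (continuous_const.mul (continuous_norm.pow 2))))⟩

lemma gen_apply (c : ℝ) (b x : EuclideanSpace ℝ (Fin n)) :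
    gen n c b x = rexp (⟪b, x⟫ - c * ‖x‖ ^ 2) := rfl

lemma gen_pos (c : ℝ) (b x : EuclideanSpace ℝ (Fin n)) : 0 < gen n c b x := exp_pos _

lemma gen_mul (c₁ c₂ : ℝ) (b₁ b₂ : EuclideanSpace ℝ (Fin n)) :
    gen n c₁ b₁ * gen n c₂ b₂ = gen n (c₁ + c₂) (b₁ + b₂) := by
  ext x
  simp only [ContinuousMap.mul_apply, gen_apply, ← Real.exp_add, inner_add_left]
  ring_nf

lemma integrable_gen {c : ℝ} (hc : 0 < c) (b : EuclideanSpace ℝ (Fin n)) :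
    Integrable (gen n c b) volume := by
  have h := GaussianFourier.integrable_cexp_neg_mul_sq_norm_add
    (V := EuclideanSpace ℝ (Fin n)) (b := (c : ℂ)) (by simpa using hc) 1 b
  have : (gen n c b : EuclideanSpace ℝ (Fin n) → ℝ)
      = fun v => ‖Complex.exp (-(c : ℂ) * (‖v‖ : ℂ) ^ 2 + 1 * (⟪b, v⟫ : ℝ))‖ := by
    funext v
    rw [gen_apply, Complex.norm_exp]
    congr 1
    simp [Complex.add_re, Complex.mul_re, ← Complex.ofReal_pow]
    ring
  rw [this]
  exact h.norm

lemma memℒp_gen {c : ℝ} (hc : 0 < c) (b : EuclideanSpace ℝ (Fin n)) :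
    MemLp (gen n c b) 2 (volume : Measure (EuclideanSpace ℝ (Fin n))) := by
  rw [memLp_two_iff_integrable_sq ((gen n c b).continuous.aestronglyMeasurable)]
  have : (fun x : EuclideanSpace ℝ (Fin n) => gen n c b x ^ 2)
      = gen n (c + c) (b + b) := by
    funext x
    rw [← gen_mul]
    simp [sq]
  rw [this]
  exact integrable_gen (by linarith) _

lemma tendsto_gen {c : ℝ} (hc : 0 < c) (b : EuclideanSpace ℝ (Fin n)) :
    Tendsto (gen n c b) (coclosedCompact (EuclideanSpace ℝ (Fin n))) (𝓝 0) := by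
  rw [Filter.coclosedCompact_eq_cocompact]
  have h1 : Tendsto (fun x : EuclideanSpace ℝ (Fin n) => ‖x‖) (cocompact _) atTop :=
    tendsto_norm_cocompact_atTop
  have h3 : Tendsto (fun t : ℝ => ‖b‖ * t - c * t ^ 2) atTop atBot := by
    have h4 : Tendsto (fun t : ℝ => t * (c * t - ‖b‖)) atTop atTop :=
      Tendsto.atTop_mul_atTop₀ tendsto_id
        (tendsto_atTop_add_const_right _ _ (Tendsto.const_mul_atTop hc tendsto_id))
    have : (fun t : ℝ => ‖b‖ * t - c * t ^ 2) = fun t => -(t * (c * t - ‖b‖)) := by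
      funext t; ring
    rw [this]
    exact tendsto_neg_atBot_iff.mpr h4
  have h2 : Tendsto (fun t : ℝ => rexp (‖b‖ * t - c * t ^ 2)) atTop (𝓝 0) :=
    Real.tendsto_exp_atBot.comp h3
  apply squeeze_zero (fun x => (gen_pos c b x).le)
    (g := fun x => rexp (‖b‖ * ‖x‖ - c * ‖x‖ ^ 2)) _ (h2.comp h1)
  intro x
  rw [gen_apply]
  apply Real.exp_le_exp.mpr
  have := real_inner_le_norm b x
  linarith

/-- The extension of `gen n c b` to the one-point compactification (junk value otherwise). -/
noncomputable def genStar (n : ℕ) (c : ℝ) (b : EuclideanSpace ℝ (Fin n)) :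
    C(OnePoint (EuclideanSpace ℝ (Fin n)), ℝ) :=
  if hc : 0 < c then OnePoint.continuousMapMk (gen n c b) 0 (tendsto_gen hc b) else 0

lemma genStar_coe {c : ℝ} (hc : 0 < c) (b x : EuclideanSpace ℝ (Fin n)) :
    genStar n c b ↑x = gen n c b x := by
  rw [genStar, dif_pos hc]; rfl

lemma genStar_infty {c : ℝ} (hc : 0 < c) (b : EuclideanSpace ℝ (Fin n)) :
    genStar n c b ∞ = 0 := by
  rw [genStar, dif_pos hc]; rfl

lemma genStar_mul {c₁ c₂ : ℝ} (hc₁ : 0 < c₁) (hc₂ : 0 < c₂)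
    (b₁ b₂ : EuclideanSpace ℝ (Fin n)) :
    genStar n c₁ b₁ * genStar n c₂ b₂ = genStar n (c₁ + c₂) (b₁ + b₂) := by
  ext q
  induction q using OnePoint.rec with
  | infty =>
    simp [ContinuousMap.mul_apply, genStar_infty hc₁, genStar_infty hc₂,
      genStar_infty (by linarith : (0:ℝ) < c₁ + c₂)]
  | coe x =>
    rw [ContinuousMap.mul_apply, genStar_coe hc₁, genStar_coe hc₂,
      genStar_coe (by linarith : (0:ℝ) < c₁ + c₂), ← ContinuousMap.mul_apply, gen_mul]

/-- Evaluation at the point at infinity, as a linear map. -/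
noncomputable def evInf (n : ℕ) :
    C(OnePoint (EuclideanSpace ℝ (Fin n)), ℝ) →ₗ[ℝ] ℝ where
  toFun f := f ∞
  map_add' _ _ := rfl
  map_smul' _ _ := rfl

end Stmt11Aux


open Stmt11Aux

set_option maxHeartbeats 2000000 in
/-- The linear span of the Gaussian-type exponentials
`x ↦ exp((b,x) − (Ax,x))`, with `b ∈ ℝⁿ` and `A` a symmetric positive-definite real
`n × n` matrix, is dense in `L²(ℝⁿ, λ, ℝ)` for Lebesgue measure `λ`. -/
theorem stmt_11 (n : ℕ) (hn : 1 ≤ n) :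
    Dense ((Submodule.span ℝ
      {F : Lp ℝ 2 (volume : Measure (EuclideanSpace ℝ (Fin n))) |
        ∃ (b : EuclideanSpace ℝ (Fin n)) (A : Matrix (Fin n) (Fin n) ℝ),
          A.IsSymm ∧ A.PosDef ∧
          (F : EuclideanSpace ℝ (Fin n) → ℝ) =ᵐ[volume]
            fun x => Real.exp ((∑ i, b i * x i) - ∑ i, A.mulVec (fun k => x k) i * x i)}
      : Submodule ℝ (Lp ℝ 2 (volume : Measure (EuclideanSpace ℝ (Fin n)))))
      : Set (Lp ℝ 2 (volume : Measure (EuclideanSpace ℝ (Fin n))))) := by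
  classical
  haveI : Nonempty (Fin n) := ⟨⟨0, hn⟩⟩
  haveI : Nontrivial (EuclideanSpace ℝ (Fin n)) := inferInstance
  haveI : T4Space (OnePoint (EuclideanSpace ℝ (Fin n))) :=
    { toT1Space := inferInstance, toNormalSpace := inferInstance }
  set S : Set (Lp ℝ 2 (volume : Measure (EuclideanSpace ℝ (Fin n)))) :=
    {F : Lp ℝ 2 (volume : Measure (EuclideanSpace ℝ (Fin n))) |
        ∃ (b : EuclideanSpace ℝ (Fin n)) (A : Matrix (Fin n) (Fin n) ℝ),
          A.IsSymm ∧ A.PosDef ∧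
          (F : EuclideanSpace ℝ (Fin n) → ℝ) =ᵐ[volume]
            fun x => Real.exp ((∑ i, b i * x i) - ∑ i, A.mulVec (fun k => x k) i * x i)}
    with hS
  -- the L² classes of the generators lie in `S`
  have hgenS : ∀ (c : ℝ) (hc : 0 < c) (b : EuclideanSpace ℝ (Fin n)),
      (memℒp_gen hc b).toLp (gen n c b) ∈ S := by
    intro c hc b
    refine ⟨b, c • (1 : Matrix (Fin n) (Fin n) ℝ), ?_, ?_, ?_⟩
    · simp [Matrix.IsSymm, Matrix.transpose_smul]
    · rw [Matrix.posDef_iff_dotProduct_mulVec]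
      constructor
      · simp [Matrix.IsHermitian, Matrix.conjTranspose_smul, Matrix.transpose_smul]
      · intro x hx
        have h1 : (c • (1 : Matrix (Fin n) (Fin n) ℝ)).mulVec x = c • x := by
          simp [Matrix.smul_mulVec]
        rw [h1]
        have hxx : 0 < dotProduct x x := by
          have hne : ∃ i, x i ≠ 0 := by
            by_contra h
            push_neg at h
            exact hx (funext h)
          obtain ⟨i, hi⟩ := hne
          apply Finset.sum_pos' (fun j _ => mul_self_nonneg _)
          exact ⟨i, Finset.mem_univ i, mul_self_pos.mpr hi⟩
        have h2 : dotProduct (star x) (c • x) = c * dotProduct x x := by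
          simp [star_trivial]
        rw [h2]
        positivity
    · refine ((memℒp_gen hc b).coeFn_toLp).trans (Filter.EventuallyEq.of_eq ?_)
      funext x
      rw [gen_apply]
      congr 1
      have hb : ⟪b, x⟫ = ∑ i, b i * x i := by
        simp [PiLp.inner_apply, mul_comm]
      have hA : ∀ i, (c • (1 : Matrix (Fin n) (Fin n) ℝ)).mulVec (fun k => x k) i
          = c * x i := by
        intro i
        simp [Matrix.smul_mulVec]
      have hx2 : c * ‖x‖ ^ 2 = ∑ i, (c • (1 : Matrix (Fin n) (Fin n) ℝ)).mulVec
          (fun k => x k) i * x i := by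
        simp only [hA]
        rw [← real_inner_self_eq_norm_sq]
        simp [PiLp.inner_apply, Finset.mul_sum]
        rw [EuclideanSpace.norm_sq_eq, Finset.mul_sum]
        exact Finset.sum_congr rfl fun i _ => by rw [Real.norm_eq_abs, sq_abs]; ring
      rw [hb, hx2]
  rw [Metric.dense_iff]
  intro F ε hε
  -- Step 1: approximate by a continuous compactly supported function
  obtain ⟨g, gsupp, hFg, gcont, gmem⟩ :=
    (Lp.memLp F).exists_hasCompactSupport_eLpNorm_sub_le (μ := volume) (p := 2)
      (by simp) (ε := ENNReal.ofReal (ε/3))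
      ((ENNReal.ofReal_pos.mpr (by positivity : (0:ℝ) < ε/3)).ne')
  -- Step 2: weighted function and extension to the one-point compactification
  set w : C(EuclideanSpace ℝ (Fin n), ℝ) := gen n 1 0 with hw
  have hwpos : ∀ x, 0 < w x := gen_pos 1 0
  have hwmem : MemLp (w : EuclideanSpace ℝ (Fin n) → ℝ) 2 volume := memℒp_gen one_pos 0
  set g' : C(EuclideanSpace ℝ (Fin n), ℝ) :=
    ⟨fun x => g x * rexp (‖x‖ ^ 2),
      gcont.mul (Real.continuous_exp.comp (continuous_norm.pow 2))⟩ with hg'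
  have hg'tendsto : Tendsto g' (coclosedCompact (EuclideanSpace ℝ (Fin n))) (𝓝 0) := by
    refine Tendsto.congr' ?_ tendsto_const_nhds
    rw [Filter.eventuallyEq_iff_exists_mem]
    refine ⟨(tsupport g)ᶜ, ?_, ?_⟩
    · rw [Filter.hasBasis_coclosedCompact.mem_iff]
      exact ⟨tsupport g, ⟨isClosed_tsupport g, gsupp⟩, subset_rfl⟩
    · intro x hx
      simp only [hg', ContinuousMap.coe_mk]
      rw [image_eq_zero_of_notMem_tsupport hx]
      simp
  set gstar : C(OnePoint (EuclideanSpace ℝ (Fin n)), ℝ) :=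
    OnePoint.continuousMapMk g' 0 hg'tendsto with hgstar
  have hgstar_coe : ∀ x : EuclideanSpace ℝ (Fin n), gstar ↑x = g' x := fun _ => rfl
  have hgstar_infty : gstar ∞ = 0 := rfl
  -- Step 3: Stone–Weierstrass on the one-point compactification
  set Gset : Set C(OnePoint (EuclideanSpace ℝ (Fin n)), ℝ) :=
    {f | ∃ c b, 0 < c ∧ f = genStar n c b} with hGset
  have mem1 : ∀ (c : ℝ), 0 < c → ∀ b,
      (genStar n c b : C(OnePoint (EuclideanSpace ℝ (Fin n)), ℝ)) ∈ Algebra.adjoin ℝ Gset :=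
    fun c hc b => Algebra.subset_adjoin ⟨c, b, hc, rfl⟩
  have hsep : (Algebra.adjoin ℝ Gset).SeparatesPoints := by
    intro x y hxy
    induction x using OnePoint.rec with
    | infty =>
      induction y using OnePoint.rec with
      | infty => exact absurd rfl hxy
      | coe v =>
        refine ⟨_, ⟨genStar n 1 0, mem1 1 one_pos 0, rfl⟩, ?_⟩
        show genStar n 1 0 ∞ ≠ genStar n 1 0 ↑v
        rw [genStar_infty one_pos, genStar_coe one_pos]
        exact (gen_pos 1 0 v).ne
    | coe v =>
      induction y using OnePoint.rec with
      | infty =>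
        refine ⟨_, ⟨genStar n 1 0, mem1 1 one_pos 0, rfl⟩, ?_⟩
        show genStar n 1 0 ↑v ≠ genStar n 1 0 ∞
        rw [genStar_infty one_pos, genStar_coe one_pos]
        exact (gen_pos 1 0 v).ne'
      | coe u =>
        refine ⟨_, ⟨genStar n 1 ((2:ℝ) • v), mem1 1 one_pos _, rfl⟩, ?_⟩
        show genStar n 1 ((2:ℝ) • v) ↑v ≠ genStar n 1 ((2:ℝ) • v) ↑u
        rw [genStar_coe one_pos, genStar_coe one_pos, gen_apply, gen_apply]
        intro hequ
        apply hxy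
        have h6 := Real.exp_eq_exp.mp hequ
        rw [real_inner_smul_left, real_inner_smul_left, real_inner_self_eq_norm_sq] at h6
        have h7 : ‖v - u‖ ^ 2 = 0 := by
          rw [norm_sub_sq_real]
          nlinarith [h6]
        have h8 : v = u := by
          have := pow_eq_zero_iff (n := 2) (by norm_num) |>.mp h7
          rw [norm_eq_zero, sub_eq_zero] at this
          exact this
        rw [h8]
  -- the constants
  set Cw : ℝ := (eLpNorm (w : EuclideanSpace ℝ (Fin n) → ℝ) 2 volume).toReal with hCw
  have hCw0 : 0 ≤ Cw := ENNReal.toReal_nonneg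
  set δ : ℝ := (ε/3) / (2 * (Cw + 1)) with hδ
  have hδpos : 0 < δ := by positivity
  obtain ⟨p, hp⟩ := ContinuousMap.exists_mem_subalgebra_near_continuousMap_of_separatesPoints
    (Algebra.adjoin ℝ Gset) hsep gstar δ hδpos
  -- Step 4: decompose p = a • 1 + z with z in the span of the generators
  have hpmem : (p : C(OnePoint (EuclideanSpace ℝ (Fin n)), ℝ))
      ∈ Submodule.span ℝ (↑(Submonoid.closure Gset) : Set _) := by
    have h9 := p.2
    rw [← Subalgebra.mem_toSubmodule, Algebra.adjoin_eq_span] at h9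
    exact h9
  have hsub : (↑(Submonoid.closure Gset) : Set C(OnePoint (EuclideanSpace ℝ (Fin n)), ℝ))
      ⊆ insert 1 Gset := by
    intro f hf
    simp only [SetLike.mem_coe] at hf
    induction hf using Submonoid.closure_induction with
    | mem f hf => exact Set.mem_insert_of_mem _ hf
    | one => exact Set.mem_insert _ _
    | mul f₁ f₂ h₁ h₂ ih₁ ih₂ =>
      rcases ih₁ with rfl | ⟨c₁, b₁, hc₁, rfl⟩
      · rw [one_mul]; exact ih₂
      · rcases ih₂ with rfl | ⟨c₂, b₂, hc₂, rfl⟩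
        · rw [mul_one]; exact Set.mem_insert_of_mem _ ⟨c₁, b₁, hc₁, rfl⟩
        · rw [genStar_mul hc₁ hc₂]
          exact Set.mem_insert_of_mem _ ⟨c₁ + c₂, b₁ + b₂, by linarith, rfl⟩
  have hp' : (p : C(OnePoint (EuclideanSpace ℝ (Fin n)), ℝ))
      ∈ (Submodule.span ℝ ({(1 : C(OnePoint (EuclideanSpace ℝ (Fin n)), ℝ))} : Set _))
        ⊔ Submodule.span ℝ Gset := by
    have h10 := Submodule.span_mono hsub hpmem
    rw [Submodule.span_insert] at h10
    exact h10
  obtain ⟨y1, hy1, z, hz, hyz⟩ := Submodule.mem_sup.mp hp'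
  obtain ⟨a, rfl⟩ := Submodule.mem_span_singleton.mp hy1
  have hzinf : z ∞ = 0 := by
    have h11 : Submodule.span ℝ Gset ≤ LinearMap.ker (evInf n) := by
      rw [Submodule.span_le]
      rintro f ⟨c, b, hc, rfl⟩
      simp only [SetLike.mem_coe, LinearMap.mem_ker]
      show genStar n c b ∞ = 0
      exact genStar_infty hc b
    exact h11 hz
  -- Step 5: pointwise estimates
  have hdist : ∀ q, |(p : C(OnePoint (EuclideanSpace ℝ (Fin n)), ℝ)) q - gstar q| ≤ δ := by
    intro q
    have h12 : |(p : C(OnePoint (EuclideanSpace ℝ (Fin n)), ℝ)) q - gstar q|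
        = ‖((p : C(OnePoint (EuclideanSpace ℝ (Fin n)), ℝ)) - gstar) q‖ := by
      simp [ContinuousMap.sub_apply]
    rw [h12]
    exact (ContinuousMap.norm_coe_le_norm _ q).trans hp.le
  have hpinf : (p : C(OnePoint (EuclideanSpace ℝ (Fin n)), ℝ)) ∞ = a := by
    rw [← hyz]
    simp [ContinuousMap.add_apply, hzinf]
  have ha : |a| ≤ δ := by
    have h13 := hdist ∞
    rw [hpinf, hgstar_infty, sub_zero] at h13
    exact h13
  have hkey : ∀ x : EuclideanSpace ℝ (Fin n), |g x - z ↑x * w x| ≤ 2 * δ * w x := by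
    intro x
    have hg : g x = g' x * w x := by
      simp only [hg', ContinuousMap.coe_mk, hw, gen_apply]
      rw [mul_assoc, ← Real.exp_add]
      norm_num [inner_zero_left]
    have hpx : (p : C(OnePoint (EuclideanSpace ℝ (Fin n)), ℝ)) ↑x = a + z ↑x := by
      rw [← hyz]; simp [ContinuousMap.add_apply]
    have h14 : |g' x - z ↑x| ≤ 2 * δ := by
      have h15 := hdist ↑x
      rw [hpx, hgstar_coe] at h15
      have h16 : g' x - z ↑x = a - (a + z ↑x - g' x) := by ring
      rw [h16]
      calc |a - (a + z ↑x - g' x)| ≤ |a| + |a + z ↑x - g' x| := abs_sub _ _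
        _ ≤ δ + δ := add_le_add ha h15
        _ = 2 * δ := by ring
    rw [hg, ← sub_mul, abs_mul, abs_of_pos (hwpos x)]
    exact mul_le_mul_of_nonneg_right h14 (hwpos x).le
  -- Step 6: the span element in L²
  have main : ∀ z' ∈ Submodule.span ℝ Gset,
      ∃ hm : MemLp (fun x : EuclideanSpace ℝ (Fin n) => z' ↑x * w x) 2 volume,
        hm.toLp _ ∈ Submodule.span ℝ S := by
    intro z' hz'
    induction hz' using Submodule.span_induction with
    | mem f hf =>
      obtain ⟨c, b, hc, rfl⟩ := hf
      have heq : (fun x : EuclideanSpace ℝ (Fin n) => genStar n c b ↑x * w x)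
          = ⇑(gen n (c+1) b) := by
        funext x
        rw [genStar_coe hc, hw, ← ContinuousMap.mul_apply, gen_mul, add_zero]
      refine ⟨by rw [heq]; exact memℒp_gen (by linarith) b, ?_⟩
      have h17 : ∀ hm : MemLp (fun x : EuclideanSpace ℝ (Fin n) => genStar n c b ↑x * w x)
          2 volume, hm.toLp _
          = (memℒp_gen (by linarith : (0:ℝ) < c + 1) b).toLp (gen n (c+1) b) := by
        intro hm
        exact MemLp.toLp_congr _ _ (Filter.EventuallyEq.of_eq heq)
      rw [h17]
      exact Submodule.subset_span (hgenS (c+1) (by linarith) b)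
    | zero =>
      have heq : (fun x : EuclideanSpace ℝ (Fin n) =>
          (0 : C(OnePoint (EuclideanSpace ℝ (Fin n)), ℝ)) ↑x * w x)
          = (0 : EuclideanSpace ℝ (Fin n) → ℝ) := by
        funext x; simp
      refine ⟨by rw [heq]; exact MemLp.zero, ?_⟩
      have h17 : ∀ hm : MemLp (fun x : EuclideanSpace ℝ (Fin n) =>
          (0 : C(OnePoint (EuclideanSpace ℝ (Fin n)), ℝ)) ↑x * w x) 2 volume,
          hm.toLp _ = (0 : Lp ℝ 2 (volume : Measure (EuclideanSpace ℝ (Fin n)))) := by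
        intro hm
        rw [MemLp.toLp_congr hm MemLp.zero (Filter.EventuallyEq.of_eq heq), MemLp.toLp_zero]
      rw [h17]
      exact Submodule.zero_mem _
    | add f₁ f₂ h₁ h₂ ih₁ ih₂ =>
      obtain ⟨hm₁, hs₁⟩ := ih₁
      obtain ⟨hm₂, hs₂⟩ := ih₂
      have heq : (fun x : EuclideanSpace ℝ (Fin n) => (f₁ + f₂) ↑x * w x)
          = (fun x : EuclideanSpace ℝ (Fin n) => f₁ ↑x * w x)
            + (fun x : EuclideanSpace ℝ (Fin n) => f₂ ↑x * w x) := by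
        funext x
        simp only [ContinuousMap.add_apply, Pi.add_apply]
        ring
      refine ⟨by rw [heq]; exact hm₁.add hm₂, ?_⟩
      have h18 : ∀ hm : MemLp (fun x : EuclideanSpace ℝ (Fin n) => (f₁ + f₂) ↑x * w x)
          2 volume, hm.toLp _ = hm₁.toLp _ + hm₂.toLp _ := by
        intro hm
        rw [← MemLp.toLp_add]
        exact MemLp.toLp_congr _ _ (Filter.EventuallyEq.of_eq heq)
      rw [h18]
      exact Submodule.add_mem _ hs₁ hs₂
    | smul a₀ f h ih =>
      obtain ⟨hm₁, hs₁⟩ := ih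
      have heq : (fun x : EuclideanSpace ℝ (Fin n) => (a₀ • f) ↑x * w x)
          = a₀ • (fun x : EuclideanSpace ℝ (Fin n) => f ↑x * w x) := by
        funext x
        simp only [ContinuousMap.smul_apply, Pi.smul_apply, smul_eq_mul]
        ring
      refine ⟨by rw [heq]; exact hm₁.const_smul a₀, ?_⟩
      have h19 : ∀ hm : MemLp (fun x : EuclideanSpace ℝ (Fin n) => (a₀ • f) ↑x * w x)
          2 volume, hm.toLp _ = a₀ • hm₁.toLp _ := by
        intro hm
        rw [← MemLp.toLp_const_smul]
        exact MemLp.toLp_congr _ _ (Filter.EventuallyEq.of_eq heq)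
      rw [h19]
      exact Submodule.smul_mem _ _ hs₁
  obtain ⟨hm, hmem⟩ := main z hz
  -- Step 7: norm estimates
  set y : Lp ℝ 2 (volume : Measure (EuclideanSpace ℝ (Fin n))) := hm.toLp _ with hy
  have hnorm1 : ‖F - gmem.toLp g‖ ≤ ε/3 := by
    have h20 : F - gmem.toLp g = ((Lp.memLp F).sub gmem).toLp (⇑F - g) := by
      rw [MemLp.toLp_sub, Lp.toLp_coeFn F (Lp.memLp F)]
      exact Lp.memLp F
    rw [h20, Lp.norm_toLp]
    exact ENNReal.toReal_le_of_le_ofReal (by positivity) hFg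
  have hnorm2 : ‖gmem.toLp g - y‖ ≤ ε/3 := by
    have h21 : gmem.toLp g - y = (gmem.sub hm).toLp
        (g - fun x : EuclideanSpace ℝ (Fin n) => z ↑x * w x) := by
      rw [hy, MemLp.toLp_sub]
    rw [h21, Lp.norm_toLp]
    have h22 : eLpNorm (g - fun x : EuclideanSpace ℝ (Fin n) => z ↑x * w x) 2 volume
        ≤ eLpNorm ((2 * δ) • (w : EuclideanSpace ℝ (Fin n) → ℝ)) 2 volume := by
      apply eLpNorm_mono
      intro x
      simp only [Pi.sub_apply, Pi.smul_apply, smul_eq_mul, Real.norm_eq_abs]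
      rw [abs_of_nonneg (mul_nonneg (by linarith [hδpos]) (hwpos x).le)]
      exact hkey x
    have h23 : eLpNorm ((2 * δ) • (w : EuclideanSpace ℝ (Fin n) → ℝ)) 2 volume
        = ENNReal.ofReal (2 * δ) * eLpNorm (w : EuclideanSpace ℝ (Fin n) → ℝ) 2 volume := by
      rw [eLpNorm_const_smul, ← ofReal_norm]
      congr 1
      rw [Real.norm_eq_abs, abs_of_pos (by linarith [hδpos])]
    have h24 : (eLpNorm ((2 * δ) • (w : EuclideanSpace ℝ (Fin n) → ℝ)) 2 volume).toReal
        = 2 * δ * Cw := by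
      rw [h23, ENNReal.toReal_mul, ENNReal.toReal_ofReal (by linarith [hδpos]), hCw]
    have h25 := ENNReal.toReal_mono (by
      rw [h23]
      exact (ENNReal.mul_lt_top ENNReal.ofReal_lt_top hwmem.2).ne) h22
    rw [h24] at h25
    have h26 : 2 * δ * (Cw + 1) = ε/3 := by
      rw [hδ]; field_simp
    have h27 : 2 * δ * Cw ≤ 2 * δ * (Cw + 1) :=
      mul_le_mul_of_nonneg_left (by linarith) (by linarith [hδpos])
    linarith [h25, h26, h27]
  refine ⟨y, Set.mem_inter ?_ hmem⟩
  rw [Metric.mem_ball, dist_eq_norm, ← neg_sub, norm_neg]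
  calc ‖F - y‖ = ‖(F - gmem.toLp g) + (gmem.toLp g - y)‖ := by rw [sub_add_sub_cancel]
    _ ≤ ‖F - gmem.toLp g‖ + ‖gmem.toLp g - y‖ := norm_add_le _ _
    _ ≤ ε/3 + ε/3 := add_le_add hnorm1 hnorm2
    _ < ε := by linarith
end
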